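/- Let P_1,…,P_M be probability distributions on [K], let P_j^n denote the law of n i.i.d. samples from P_j, and let δ ∈ [0,1]. A weak hypothesis test is a measurable function Ψ : [K]^n → {1,…,M}, interpreted as identifying the single hypothesis believed NOT to be true; it errs on P_j exactly when Ψ = j. Suppose inf_Ψ max_j P_j^n(Ψ = j) > δ, where the infimum is over all weak hypothesis tests. Then inf_{P̂} max_j P_j^n( KL(P_j ‖ P̂) ≥ s_n ) > δ for s_n = min_{P ∈ Δ^K} max_j KL(P_j ‖ P), where the infimum is over all estimators P̂, i.e. all measurable maps from [K]^n to Δ^K. -/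

import Mathlib

open scoped ENNReal
open MeasureTheory

/-- The probability simplex on `Fin K`. -/
def simplex (K : ℕ) : Set (Fin K → ℝ) :=
  {p | (∀ i, 0 ≤ p i) ∧ ∑ i, p i = 1}

/-- Kullback–Leibler divergence between two vectors on `Fin K`, with the
conventions `0 · log 0 = 0` and value `∞` if `p i > 0 = q i` for some `i`. -/
noncomputable def klD {K : ℕ} (p q : Fin K → ℝ) : ℝ≥0∞ :=
  if ∀ i, 0 < p i → 0 < q i then ENNReal.ofReal (∑ i, p i * Real.log (p i / q i)) else ⊤

/-- The law of `n` i.i.d. samples from the distribution `p` on `Fin K`. -/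
noncomputable def iidMeasure (n K : ℕ) (p : Fin K → ℝ) : Measure (Fin n → Fin K) :=
  ∑ x : Fin n → Fin K, (∏ t, ENNReal.ofReal (p (x t))) • Measure.dirac x

/-- `countTo x t i` is the number of indices `s` among the first `t` samples with `x s = i`. -/
def countTo {n K : ℕ} (x : Fin n → Fin K) (t : ℕ) (i : Fin K) : ℕ :=
  (Finset.univ.filter (fun s : Fin n => (s : ℕ) < t ∧ x s = i)).card

/-- reduction of estimation to weak hypothesis testing. -/
theorem reduction_to_weak_testing (K n M : ℕ) (hK : 2 ≤ K) (hM : 1 ≤ M)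
    (P : Fin M → (Fin K → ℝ)) (hP : ∀ j, P j ∈ simplex K)
    (δ : ℝ) (hδ : δ ∈ Set.Icc (0 : ℝ) 1)
    (htest : ENNReal.ofReal δ <
      ⨅ Ψ : (Fin n → Fin K) → Fin M, ⨆ j, iidMeasure n K (P j) {x | Ψ x = j}) :
    ENNReal.ofReal δ <
      ⨅ phat : {f : (Fin n → Fin K) → (Fin K → ℝ) // ∀ x, f x ∈ simplex K},
        ⨆ j, iidMeasure n K (P j)
          {x | (⨅ q : {q : Fin K → ℝ // q ∈ simplex K}, ⨆ j', klD (P j') q.val) ≤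
            klD (P j) (phat.val x)} := by
  haveI : Nonempty (Fin M) := ⟨⟨0, hM⟩⟩
  refine lt_of_lt_of_le htest (le_iInf fun phat => ?_)
  set Ψ : (Fin n → Fin K) → Fin M := fun x =>
    Classical.choose (exists_eq_ciSup_of_finite (f := fun j => klD (P j) (phat.val x)))
  refine le_trans (iInf_le _ Ψ) (iSup_mono fun j => measure_mono fun x hx => ?_)
  have hspec := Classical.choose_spec
    (exists_eq_ciSup_of_finite (f := fun j => klD (P j) (phat.val x)))
  have hx' : Ψ x = j := hx
  calc (⨅ q : {q : Fin K → ℝ // q ∈ simplex K}, ⨆ j', klD (P j') q.val)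
      ≤ ⨆ j', klD (P j') (phat.val x) := iInf_le _ (⟨phat.val x, phat.property x⟩ : {q : Fin K → ℝ // q ∈ simplex K})
    _ = klD (P (Ψ x)) (phat.val x) := hspec.symm
    _ = klD (P j) (phat.val x) := by rw [hx']
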